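/- arXiv:2412.14068 — 9 statements merged into one kernel-verified Lean document; each statement's English description precedes it below -/
import Mathlib

section
/- Let S be a semigroupoid and (α,X) a partial action of S on a set X satisfying condition (G1). If S^s ≠ ∅ for every s ∈ S, then (α,X) satisfies condition (G2), and therefore (α,X) is a global action of S. -/
universe u v w

/-- An (Exel) semigroupoid: a set `S` with a set of composable pairs (encoded by
the relation `comp`) and a multiplication, associative in Exel's sense. -/
structure Semigroupoid (S : Type u) where
  comp : S → S → Prop
  mul : S → S → S
  assoc : ∀ s t r : S,
    ((comp s t ∧ comp t r) ∨ (comp s t ∧ comp (mul s t) r) ∨ (comp t r ∧ comp s (mul t r))) →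
      comp s t ∧ comp t r ∧ comp (mul s t) r ∧ comp s (mul t r) ∧
        mul (mul s t) r = mul s (mul t r)

namespace Semigroupoid

variable {S : Type u} {X : Type v}

/-- `S^s = {t | (s,t) ∈ S⁽²⁾}`. -/
def rightComp (G : Semigroupoid S) (s : S) : Set S := {t | G.comp s t}

/-- `X_s = α_s(ₛX)`. -/
def img (dom : S → Set X) (act : S → X → X) (s : S) : Set X := act s '' dom s

/-- Condition (P1): `α_t⁻¹(ₛX ∩ X_t) = ₜX ∩ ₛₜX` for composable `(s,t)`. -/
def P1 (G : Semigroupoid S) (dom : S → Set X) (act : S → X → X) : Prop :=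
  ∀ s t : S, G.comp s t →
    {x | x ∈ dom t ∧ act t x ∈ dom s ∩ img dom act t} = dom t ∩ dom (G.mul s t)

/-- Condition (P2): `α_s ∘ α_t = α_{st}` on `ₜX ∩ ₛₜX` for composable `(s,t)`. -/
def P2 (G : Semigroupoid S) (dom : S → Set X) (act : S → X → X) : Prop :=
  ∀ s t : S, G.comp s t → ∀ x ∈ dom t ∩ dom (G.mul s t),
    act s (act t x) = act (G.mul s t) x

/-- A partial action of the semigroupoid on `X`. -/
def IsPartialAction (G : Semigroupoid S) (dom : S → Set X) (act : S → X → X) : Prop :=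
  P1 G dom act ∧ P2 G dom act

/-- Condition (G1): if `S^s = S^t ≠ ∅` then `ₛX = ₜX`. -/
def G1 (G : Semigroupoid S) (dom : S → Set X) : Prop :=
  ∀ s t : S, G.rightComp s = G.rightComp t → (G.rightComp s).Nonempty → dom s = dom t

/-- Condition (G2): if `(s,t) ∈ S⁽²⁾` then `ₜX = ₛₜX`. -/
def G2 (G : Semigroupoid S) (dom : S → Set X) : Prop :=
  ∀ s t : S, G.comp s t → dom t = dom (G.mul s t)

/-- A global action of the semigroupoid on `X`. -/
def IsGlobalAction (G : Semigroupoid S) (dom : S → Set X) (act : S → X → X) : Prop :=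
  IsPartialAction G dom act ∧ G1 G dom ∧ G2 G dom

/-- A partial action is non-degenerate when `X = ⋃ₛ (ₛX ∪ X_s)`. -/
def Nondegenerate (G : Semigroupoid S) (dom : S → Set X) (act : S → X → X) : Prop :=
  (⋃ s : S, dom s ∪ img dom act s) = Set.univ

section Morphisms

variable {Y : Type w}

/-- A morphism of partial actions `φ : (α,X) → (β,Y)`. -/
def IsMorphism (G : Semigroupoid S) (domX : S → Set X) (actX : S → X → X)
    (domY : S → Set Y) (actY : S → Y → Y) (φ : X → Y) : Prop :=
  ∀ s : S, (∀ x ∈ domX s, φ x ∈ domY s) ∧ (∀ x ∈ domX s, φ (actX s x) = actY s (φ x))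

/-- An embedding of partial actions. -/
def IsEmbedding (G : Semigroupoid S) (domX : S → Set X) (actX : S → X → X)
    (domY : S → Set Y) (actY : S → Y → Y) (φ : X → Y) : Prop :=
  Function.Injective φ ∧ IsMorphism G domX actX domY actY φ ∧
    ∀ s : S, domX s = {x | φ x ∈ domY s ∧ actY s (φ x) ∈ Set.range φ}

end Morphisms

/-- The relation `∼` on `S`: `s ∼ t` iff `s = t`, or `S^s = S^t ≠ ∅`, or `s = ut`. -/
def simRel (G : Semigroupoid S) (s t : S) : Prop :=
  s = t ∨ (G.rightComp s = G.rightComp t ∧ (G.rightComp s).Nonempty) ∨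
    ∃ u : S, G.comp u t ∧ s = G.mul u t

/-- `R`: the smallest equivalence relation containing `∼`. -/
def Rrel (G : Semigroupoid S) : S → S → Prop := Relation.EqvGen (simRel G)

/-- `₍ρₛ₎X = ⋃ ({ₜX : t R s} ∪ {X_t : t ∈ S^s})`. -/
def rhoDom (G : Semigroupoid S) (dom : S → Set X) (act : S → X → X) (s : S) : Set X :=
  {x | (∃ t : S, Rrel G t s ∧ x ∈ dom t) ∨ (∃ t : S, G.comp s t ∧ x ∈ img dom act t)}

/-- The set `D ⊆ S^δ × X`, where `S^δ = S ∪ {δ}` is encoded as `Option S`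
(with `none` playing the role of the extra symbol `δ`). -/
def DSet (G : Semigroupoid S) (dom : S → Set X) (act : S → X → X) : Set (Option S × X) :=
  {p | ∀ s : S, p.1 = some s → p.2 ∈ rhoDom G dom act s}

theorem noneMem (G : Semigroupoid S) (dom : S → Set X) (act : S → X → X) (x : X) :
    ((none : Option S), x) ∈ DSet G dom act := by
  intro s h
  simp at h

/-- Generating relation for `≈`:
(1) `(δ, α_s x) ∼ (s, x)` for `x ∈ ₛX`;
(2) `(tu, x) ∼ (t, α_u x)` for `u ∈ S^t` and `x ∈ ᵤX`. -/
def preRel (G : Semigroupoid S) (dom : S → Set X) (act : S → X → X) :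
    Option S × X → Option S × X → Prop := fun p q =>
  (∃ (s : S) (x : X), x ∈ dom s ∧ p = (none, act s x) ∧ q = (some s, x)) ∨
  (∃ (t u : S) (x : X), G.comp t u ∧ x ∈ dom u ∧
      p = (some (G.mul t u), x) ∧ q = (some t, act u x))

/-- `≈`: the smallest equivalence relation containing the generating relation. -/
def approx (G : Semigroupoid S) (dom : S → Set X) (act : S → X → X) :
    Option S × X → Option S × X → Prop :=
  Relation.EqvGen (preRel G dom act)

/-- The setoid on `D` induced by `≈`. -/
def DSetoid (G : Semigroupoid S) (dom : S → Set X) (act : S → X → X) :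
    Setoid (DSet G dom act) :=
  Setoid.comap Subtype.val (Relation.EqvGen.setoid (preRel G dom act))

/-- `E = D/≈`. -/
def EType (G : Semigroupoid S) (dom : S → Set X) (act : S → X → X) : Type _ :=
  Quotient (DSetoid G dom act)

/-- The class `[a,x] ∈ E` of `(a,x) ∈ D`. -/
def mkE (G : Semigroupoid S) (dom : S → Set X) (act : S → X → X)
    (p : DSet G dom act) : EType G dom act :=
  Quotient.mk (DSetoid G dom act) p

/-- `ₛE = {[a,x] : (a,x) ≈ (t,y) for some t ∈ S^s} ∪ {[δ,x] : x ∈ ₍ρₛ₎X}`. -/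
def domE (G : Semigroupoid S) (dom : S → Set X) (act : S → X → X) (s : S) :
    Set (EType G dom act) :=
  {e | (∃ (p : DSet G dom act) (t : S) (y : X),
          G.comp s t ∧ approx G dom act p.val (some t, y) ∧ e = mkE G dom act p) ∨
       (∃ x : X, x ∈ rhoDom G dom act s ∧
          e = mkE G dom act ⟨(none, x), noneMem G dom act x⟩)}

/-- `δ : X → E`, `x ↦ [δ,x]`. -/
def deltaMap (G : Semigroupoid S) (dom : S → Set X) (act : S → X → X) (x : X) :
    EType G dom act :=
  mkE G dom act ⟨(none, x), noneMem G dom act x⟩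

end Semigroupoid

open Semigroupoid in
/-- If a partial action satisfies (G1) and `S^s ≠ ∅` for every `s`, then it satisfies (G2),
and is therefore a global action. -/
theorem statement1 {S : Type u} {X : Type v} (G : Semigroupoid S)
    (dom : S → Set X) (act : S → X → X)
    (hα : IsPartialAction G dom act) (hG1 : G1 G dom)
    (h : ∀ s : S, (G.rightComp s).Nonempty) :
    G2 G dom ∧ IsGlobalAction G dom act := by
  have hg2 : Semigroupoid.G2 G dom := by
    intro s t hst
    have hset : G.rightComp t = G.rightComp (G.mul s t) := by
      ext r
      constructor
      · intro htr
        exact (G.assoc s t r (Or.inl ⟨hst, htr⟩)).2.2.1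
      · intro hstr
        exact (G.assoc s t r (Or.inr (Or.inl ⟨hst, hstr⟩))).2.1
    exact hG1 t (G.mul s t) hset (h t)
  exact ⟨hg2, hα, hG1, hg2⟩
end

section
/- Let S be a semigroupoid and let R be the smallest equivalence relation on S containing the relation ∼ defined by: s ∼ t iff s = t, or S^s = S^t ≠ ∅, or s = ut for some u with (u,t) ∈ S⁽²⁾. Then s R t implies S^s = S^t. -/
universe u v w

open Semigroupoid in
/-- `s R t` implies `S^s = S^t`. -/
theorem statement8 {S : Type u} (G : Semigroupoid S) (s t : S) (h : Rrel G s t) :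
    G.rightComp s = G.rightComp t := by
  induction h with
  | rel a b hab =>
    rcases hab with rfl | ⟨heq, _⟩ | ⟨u, hcomp, rfl⟩
    · rfl
    · exact heq
    · ext r
      simp only [rightComp, Set.mem_setOf_eq]
      constructor
      · intro hr
        exact (G.assoc u b r (Or.inr (Or.inl ⟨hcomp, hr⟩))).2.1
      · intro hr
        exact (G.assoc u b r (Or.inl ⟨hcomp, hr⟩)).2.2.1
  | refl a => rfl
  | symm a b _ ih => exact ih.symm
  | trans a b c _ _ ih1 ih2 => exact ih1.trans ih2
end

section
/- Let S be a semigroupoid, (α,X) a partial action of S, and ≈ the equivalence relation on the set D from the universal globalization construction. If s,t ∈ S and (s,x) ≈ (t,y), then x ∈ ₛX if and only if y ∈ ₜX, and in that case α_s(x) = α_t(y). -/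
universe u v w

open Classical in
noncomputable def PhiInv {S : Type u} {X : Type v} (dom : S → Set X) (act : S → X → X) :
    Option S × X → Option X
  | (none, x) => some x
  | (some s, x) => if x ∈ dom s then some (act s x) else none

open Semigroupoid in
theorem phiInv_invariant {S : Type u} {X : Type v} (G : Semigroupoid S)
    (dom : S → Set X) (act : S → X → X) (hα : IsPartialAction G dom act)
    {p q : Option S × X} (h : approx G dom act p q) :
    PhiInv dom act p = PhiInv dom act q := by
  induction h with
  | refl => rfl
  | symm _ _ _ ih => exact ih.symm
  | trans _ _ _ _ _ ih1 ih2 => exact ih1.trans ih2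
  | rel p q hpq =>
    rcases hpq with ⟨s, x, hx, hp, hq⟩ | ⟨t, u, x, hc, hx, hp, hq⟩
    · subst hp; subst hq
      simp [PhiInv, hx]
    · subst hp; subst hq
      have hP1 := hα.1 t u hc
      have himg : act u x ∈ img dom act u := ⟨x, hx, rfl⟩
      have key : x ∈ dom (G.mul t u) ↔ act u x ∈ dom t := by
        constructor
        · intro hm
          have : x ∈ dom u ∩ dom (G.mul t u) := ⟨hx, hm⟩
          rw [← hP1] at this
          exact this.2.1
        · intro hd
          have : x ∈ {x | x ∈ dom u ∧ act u x ∈ dom t ∩ img dom act u} :=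
            ⟨hx, hd, himg⟩
          rw [hP1] at this
          exact this.2
      by_cases hm : x ∈ dom (G.mul t u)
      · have hd : act u x ∈ dom t := key.mp hm
        have := hα.2 t u hc x ⟨hx, hm⟩
        simp [PhiInv, hm, hd, this]
      · have hd : act u x ∉ dom t := fun h => hm (key.mpr h)
        simp [PhiInv, hm, hd]

open Semigroupoid in
/-- If `(s,x) ≈ (t,y)` (with `s,t ∈ S`), then `x ∈ ₛX ↔ y ∈ ₜX`, and in that case
`α_s(x) = α_t(y)`. -/
theorem statement11 {S : Type u} {X : Type v} (G : Semigroupoid S)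
    (dom : S → Set X) (act : S → X → X) (hα : IsPartialAction G dom act)
    (s t : S) (x y : X)
    (hDs : ((some s : Option S), x) ∈ DSet G dom act)
    (hDt : ((some t : Option S), y) ∈ DSet G dom act)
    (h : approx G dom act (some s, x) (some t, y)) :
    (x ∈ dom s ↔ y ∈ dom t) ∧ (x ∈ dom s → act s x = act t y) := by
  have key := phiInv_invariant G dom act hα h
  classical
  simp only [PhiInv] at key
  constructor
  · constructor
    · intro hx
      by_contra hy
      simp [hx, hy] at key
    · intro hy
      by_contra hx
      simp [hx, hy] at key
  · intro hx
    have hy : y ∈ dom t := by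
      by_contra hy
      simp [hx, hy] at key
    simpa [hx, hy] using key
end

section
/- Let S be a semigroupoid, (α,X) a partial action of S, and ≈ the equivalence relation on the set D from the universal globalization construction. If s,t,p ∈ S with (s,x) ≈ (t,y) and (p,s), (p,t) ∈ S⁽²⁾, then (ps,x) ≈ (pt,y). -/
universe u v w

open Semigroupoid in
/-- Strengthened invariant for the EqvGen induction. -/
def QR {S : Type u} {X : Type v} (G : Semigroupoid S)
    (dom : S → Set X) (act : S → X → X) :
    Option S × X → Option S × X → Prop
  | (none, z), (none, w) => z = w
  | (none, z), (some t, y) => y ∈ dom t ∧ z = act t y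
  | (some s, x), (none, z) => x ∈ dom s ∧ z = act s x
  | (some s, x), (some t, y) =>
      (∀ p, G.comp p s → G.comp p t →
        approx G dom act (some (G.mul p s), x) (some (G.mul p t), y)) ∧
      (x ∈ dom s ↔ y ∈ dom t) ∧
      (x ∈ dom s → act s x = act t y) ∧
      ((∀ p, G.comp p s ↔ G.comp p t) ∨ x ∈ dom s)

open Semigroupoid in
lemma step_approx {S : Type u} {X : Type v} (G : Semigroupoid S)
    (dom : S → Set X) (act : S → X → X) {p s : S} {x : X}
    (hps : G.comp p s) (hx : x ∈ dom s) :
    approx G dom act (some (G.mul p s), x) (some p, act s x) :=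
  Relation.EqvGen.rel _ _ (Or.inr ⟨p, s, x, hps, hx, rfl, rfl⟩)

open Semigroupoid in
lemma approx_QR {S : Type u} {X : Type v} (G : Semigroupoid S)
    (dom : S → Set X) (act : S → X → X) (hα : IsPartialAction G dom act)
    {a b : Option S × X} (h : approx G dom act a b) : QR G dom act a b := by
  induction h with
  | rel a b hab =>
    rcases hab with ⟨s, x, hx, rfl, rfl⟩ | ⟨t, u, x, htu, hxu, rfl, rfl⟩
    · exact ⟨hx, rfl⟩
    · refine ⟨?_, ?_, ?_, ?_⟩
      · intro p hptu hpt
        obtain ⟨_, _, hptu', _, heq⟩ := G.assoc p t u (Or.inl ⟨hpt, htu⟩)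
        have := step_approx G dom act hptu' hxu
        rwa [heq] at this
      · constructor
        · intro hxtu
          have hx2 : x ∈ dom u ∩ dom (G.mul t u) := ⟨hxu, hxtu⟩
          rw [← hα.1 t u htu] at hx2
          exact hx2.2.1
        · intro hy
          have hx2 : x ∈ {x | x ∈ dom u ∧ act u x ∈ dom t ∩ img dom act u} :=
            ⟨hxu, hy, ⟨x, hxu, rfl⟩⟩
          rw [hα.1 t u htu] at hx2
          exact hx2.2
      · intro hxtu
        exact (hα.2 t u htu x ⟨hxu, hxtu⟩).symm
      · left
        intro p
        constructor
        · intro hptu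
          exact (G.assoc p t u (Or.inr (Or.inr ⟨htu, hptu⟩))).1
        · intro hpt
          exact (G.assoc p t u (Or.inl ⟨hpt, htu⟩)).2.2.2.1
  | refl a =>
    obtain ⟨a1, xa⟩ := a
    rcases a1 with _ | s
    · rfl
    · exact ⟨fun p hps hps' => Relation.EqvGen.refl _, Iff.rfl, fun _ => rfl,
        Or.inl fun p => Iff.rfl⟩
  | symm a b hab ih =>
    obtain ⟨a1, xa⟩ := a; obtain ⟨b1, xb⟩ := b
    rcases a1 with _ | s <;> rcases b1 with _ | t
    · exact ih.symm
    · exact ih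
    · exact ih
    · obtain ⟨i1, i2, i3, i4⟩ := ih
      refine ⟨fun p hpt hps => Relation.EqvGen.symm _ _ (i1 p hps hpt), i2.symm,
        fun hy => (i3 (i2.mpr hy)).symm, ?_⟩
      rcases i4 with hiff | hxs
      · exact Or.inl fun p => (hiff p).symm
      · exact Or.inr (i2.mp hxs)
  | trans a b c hab hbc ih1 ih2 =>
    obtain ⟨a1, xa⟩ := a; obtain ⟨b1, xb⟩ := b; obtain ⟨c1, xc⟩ := c
    rcases a1 with _ | s <;> rcases b1 with _ | r <;> rcases c1 with _ | t
    · exact ih1.trans ih2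
    · exact ⟨ih2.1, ih1.trans ih2.2⟩
    · exact ih1.2.trans ih2.2.symm
    · obtain ⟨hbr, hxa⟩ := ih1
      obtain ⟨j1, j2, j3, j4⟩ := ih2
      exact ⟨j2.mp hbr, hxa.trans (j3 hbr)⟩
    · exact ⟨ih1.1, ih2.symm.trans ih1.2⟩
    · obtain ⟨hxs, hb1⟩ := ih1
      obtain ⟨hct, hb2⟩ := ih2
      have he : act s xa = act t xc := hb1.symm.trans hb2
      refine ⟨?_, iff_of_true hxs hct, fun _ => he, Or.inr hxs⟩
      intro p hps hpt
      have h1 := step_approx G dom act hps hxs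
      have h2 := step_approx G dom act hpt hct
      rw [← he] at h2
      exact Relation.EqvGen.trans _ _ _ h1 (Relation.EqvGen.symm _ _ h2)
    · obtain ⟨i1, i2, i3, i4⟩ := ih1
      obtain ⟨hbr, hc⟩ := ih2
      exact ⟨i2.mpr hbr, hc.trans (i3 (i2.mpr hbr)).symm⟩
    · obtain ⟨i1, i2, i3, i4⟩ := ih1
      obtain ⟨j1, j2, j3, j4⟩ := ih2
      refine ⟨?_, i2.trans j2, fun hxs => (i3 hxs).trans (j3 (i2.mp hxs)), ?_⟩
      · intro p hps hpt
        rcases i4 with hiff | hxs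
        · have hpr := (hiff p).mp hps
          exact Relation.EqvGen.trans _ _ _ (i1 p hps hpr) (j1 p hpr hpt)
        · have hbr := i2.mp hxs
          have hct := j2.mp hbr
          have he : act s xa = act t xc := (i3 hxs).trans (j3 hbr)
          have h1 := step_approx G dom act hps hxs
          have h2 := step_approx G dom act hpt hct
          rw [← he] at h2
          exact Relation.EqvGen.trans _ _ _ h1 (Relation.EqvGen.symm _ _ h2)
      · rcases i4 with hiff | hxs
        · rcases j4 with jiff | hbr
          · exact Or.inl fun p => (hiff p).trans (jiff p)
          · exact Or.inr (i2.mpr hbr)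
        · exact Or.inr hxs

open Semigroupoid in
/-- If `(s,x) ≈ (t,y)` and `(p,s), (p,t) ∈ S⁽²⁾`, then `(ps,x) ≈ (pt,y)`. -/
theorem statement12 {S : Type u} {X : Type v} (G : Semigroupoid S)
    (dom : S → Set X) (act : S → X → X) (hα : IsPartialAction G dom act)
    (s t p : S) (x y : X)
    (hDs : ((some s : Option S), x) ∈ DSet G dom act)
    (hDt : ((some t : Option S), y) ∈ DSet G dom act)
    (h : approx G dom act (some s, x) (some t, y))
    (hps : G.comp p s) (hpt : G.comp p t) :
    approx G dom act (some (G.mul p s), x) (some (G.mul p t), y) :=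
  (approx_QR G dom act hα h).1 p hps hpt
end

section
/- Let S be a semigroupoid, (α,X) a partial action of S, and ≈ the equivalence relation on the set D from the universal globalization construction. If t,p ∈ S with (δ,x) ≈ (t,y) and (p,t) ∈ S⁽²⁾, then (p,x) ≈ (pt,y). -/
universe u v w

namespace Semigroupoid

variable {S : Type u} {X : Type v}

/-- Invariant preserved by the generating relation of `≈`. -/
def Phi (G : Semigroupoid S) (dom : S → Set X) (act : S → X → X) :
    Option S × X → Option S × X → Prop := fun a b =>
  match a, b with
  | (none, x), (none, x') => x = x'
  | (none, x), (some t, y) => y ∈ dom t ∧ act t y = x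
  | (some t, y), (none, x) => y ∈ dom t ∧ act t y = x
  | (some s, x), (some t, y) =>
      (x ∈ dom s → y ∈ dom t ∧ act t y = act s x) ∧
      (y ∈ dom t → x ∈ dom s ∧ act s x = act t y)

theorem phi_of_approx {G : Semigroupoid S} {dom : S → Set X} {act : S → X → X}
    (hα : IsPartialAction G dom act) {a b : Option S × X}
    (h : approx G dom act a b) : Phi G dom act a b := by
  obtain ⟨hP1, hP2⟩ := hα
  induction h with
  | rel a b hab =>
    rcases hab with ⟨s, x, hx, rfl, rfl⟩ | ⟨t, u, x, htu, hxu, rfl, rfl⟩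
    · exact ⟨hx, rfl⟩
    · constructor
      · intro hx
        have hmem : x ∈ dom u ∩ dom (G.mul t u) := ⟨hxu, hx⟩
        have hx' : x ∈ {z | z ∈ dom u ∧ act u z ∈ dom t ∩ img dom act u} := by
          rw [hP1 t u htu]; exact hmem
        exact ⟨hx'.2.1, hP2 t u htu x hmem⟩
      · intro hy
        have hx' : x ∈ {z | z ∈ dom u ∧ act u z ∈ dom t ∩ img dom act u} :=
          ⟨hxu, hy, ⟨x, hxu, rfl⟩⟩
        rw [hP1 t u htu] at hx'
        exact ⟨hx'.2, (hP2 t u htu x hx').symm⟩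
  | refl a =>
    rcases a with ⟨_ | s, x⟩
    · rfl
    · exact ⟨fun hx => ⟨hx, rfl⟩, fun hx => ⟨hx, rfl⟩⟩
  | symm a b _ ih =>
    rcases a with ⟨_ | s, x⟩ <;> rcases b with ⟨_ | t, y⟩
    · exact ih.symm
    · exact ih
    · exact ih
    · exact ⟨ih.2, ih.1⟩
  | trans a b c _ _ ih1 ih2 =>
    rcases a with ⟨_ | s, x⟩ <;> rcases b with ⟨_ | t, y⟩ <;> rcases c with ⟨_ | r, z⟩
    · exact ih1.trans ih2
    · exact ih1 ▸ ih2
    · exact ih1.2.symm.trans ih2.2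
    · obtain ⟨hy, hvy⟩ := ih1
      obtain ⟨hz, hvz⟩ := (ih2 : Phi G dom act (some t, y) (some r, z)).1 hy
      exact ⟨hz, hvz.trans hvy⟩
    · exact ih2 ▸ ih1
    · obtain ⟨hx, hvx⟩ := ih1
      obtain ⟨hz, hvz⟩ := ih2
      exact ⟨fun _ => ⟨hz, hvz.trans hvx.symm⟩, fun _ => ⟨hx, hvx.trans hvz.symm⟩⟩
    · obtain ⟨hy, hvy⟩ := ih2
      obtain ⟨hx, hvx⟩ :=
        ((ih1 : Phi G dom act (some s, x) (some t, y)).2 hy)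
      exact ⟨hx, hvx.trans hvy⟩
    · refine ⟨fun hx => ?_, fun hz => ?_⟩
      · obtain ⟨hy, hvy⟩ := ih1.1 hx
        obtain ⟨hz, hvz⟩ := ih2.1 hy
        exact ⟨hz, hvz.trans hvy⟩
      · obtain ⟨hy, hvy⟩ := ih2.2 hz
        obtain ⟨hx, hvx⟩ := ih1.2 hy
        exact ⟨hx, hvx.trans hvy⟩

end Semigroupoid

open Semigroupoid in
/-- If `(δ,x) ≈ (t,y)` and `(p,t) ∈ S⁽²⁾`, then `(p,x) ≈ (pt,y)`. -/
theorem statement13 {S : Type u} {X : Type v} (G : Semigroupoid S)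
    (dom : S → Set X) (act : S → X → X) (hα : IsPartialAction G dom act)
    (t p : S) (x y : X)
    (hDt : ((some t : Option S), y) ∈ DSet G dom act)
    (h : approx G dom act (none, x) (some t, y))
    (hpt : G.comp p t) :
    approx G dom act (some p, x) (some (G.mul p t), y) := by
  obtain ⟨hy, hxy⟩ : y ∈ dom t ∧ act t y = x := phi_of_approx hα h
  have hgen : preRel G dom act (some (G.mul p t), y) (some p, act t y) :=
    Or.inr ⟨p, t, y, hpt, hy, rfl, rfl⟩
  have := Relation.EqvGen.symm _ _ (Relation.EqvGen.rel _ _ hgen)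
  rwa [hxy] at this
end

section
/- Let S be a semigroupoid, (α,X) a partial action of S, and ≈ the equivalence relation on the set D from the universal globalization construction. If (δ,x) ≈ (δ,y), then x = y. -/
universe u v w

open Semigroupoid in
/-- If `(δ,x) ≈ (δ,y)`, then `x = y`. -/
theorem statement14 {S : Type u} {X : Type v} (G : Semigroupoid S)
    (dom : S → Set X) (act : S → X → X) (hα : IsPartialAction G dom act)
    (x y : X) (h : approx G dom act (none, x) (none, y)) :
    x = y := by
  classical
  obtain ⟨hP1, hP2⟩ := hα
  set g : Option S × X → Option X := fun p =>
    match p.1 with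
    | none => some p.2
    | some s => if p.2 ∈ dom s then some (act s p.2) else none with hg
  have key : ∀ p q, preRel G dom act p q → g p = g q := by
    rintro p q (⟨s, z, hz, rfl, rfl⟩ | ⟨t, u, z, hc, hz, rfl, rfl⟩)
    · simp [g, hz]
    · have hset := hP1 t u hc
      have hmemiff : z ∈ dom (G.mul t u) ↔ act u z ∈ dom t := by
        constructor
        · intro hm
          have : z ∈ {x | x ∈ dom u ∧ act u x ∈ dom t ∩ img dom act u} := by
            rw [hset]; exact ⟨hz, hm⟩
          exact this.2.1
        · intro ht
          have : z ∈ dom u ∩ dom (G.mul t u) := by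
            rw [← hset]; exact ⟨hz, ht, ⟨z, hz, rfl⟩⟩
          exact this.2
      by_cases hm : z ∈ dom (G.mul t u)
      · have ht := hmemiff.mp hm
        have hp2 := hP2 t u hc z ⟨hz, hm⟩
        simp [g, hm, ht, hp2]
      · have ht : act u z ∉ dom t := fun h => hm (hmemiff.mpr h)
        simp [g, hm, ht]
  have inv : ∀ p q, approx G dom act p q → g p = g q := by
    intro p q h
    induction h with
    | rel a b hab => exact key a b hab
    | refl a => rfl
    | symm a b _ ih => exact ih.symm
    | trans a b c _ _ ih1 ih2 => exact ih1.trans ih2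
  have hxy := inv _ _ h
  simpa [g] using hxy
end

section
/- Let S be a semigroupoid and (α,X) a partial action of S. Let E = D/≈ with equivalence classes [a,x], for each s ∈ S let ₛE = {[a,x] : (a,x) ≈ (t,y) for some t ∈ S^s} ∪ {[δ,x] : x ∈ ₍ρₛ₎X}, and define β_s : ₛE → E by β_s([t,y]) = [st,y] when (t,y) ∈ D with t ∈ S^s, and β_s([δ,x]) = [s,x] when x ∈ ₍ρₛ₎X. Then the pair (β,E) = ((ₛE)_{s∈S},(β_s)_{s∈S}) is a well-defined global action of S on E. -/
universe u v w

namespace Semigroupoid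

variable {S : Type u} {X : Type v}

section Aux

variable (G : Semigroupoid S) (dom : S → Set X) (act : S → X → X)

lemma assoc_left {s t u : S} (h1 : G.comp s t) (h2 : G.comp t u) :
    G.comp (G.mul s t) u ∧ G.comp s (G.mul t u) ∧
      G.mul (G.mul s t) u = G.mul s (G.mul t u) := by
  have h := G.assoc s t u (Or.inl ⟨h1, h2⟩)
  exact ⟨h.2.2.1, h.2.2.2.1, h.2.2.2.2⟩

lemma comp_mul_right_iff {t u : S} (h : G.comp t u) (s : S) :
    G.comp s (G.mul t u) ↔ G.comp s t := by
  constructor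
  · intro h2; exact (G.assoc s t u (Or.inr (Or.inr ⟨h, h2⟩))).1
  · intro h2; exact (assoc_left G h2 h).2.1

lemma comp_mul_left_iff {s t : S} (h : G.comp s t) (u : S) :
    G.comp (G.mul s t) u ↔ G.comp t u := by
  constructor
  · intro h2; exact (G.assoc s t u (Or.inr (Or.inl ⟨h, h2⟩))).2.1
  · intro h2; exact (assoc_left G h h2).1

lemma rrel_mul {s t : S} (h : G.comp s t) : Rrel G (G.mul s t) t :=
  Relation.EqvGen.rel _ _ (Or.inr (Or.inr ⟨s, h, rfl⟩))

lemma rhoDom_mul {s t : S} (h : G.comp s t) :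
    rhoDom G dom act t = rhoDom G dom act (G.mul s t) := by
  have hR : Rrel G (G.mul s t) t := rrel_mul G h
  ext x
  constructor
  · rintro (⟨r, hr, hx⟩ | ⟨v, hv, hx⟩)
    · exact Or.inl ⟨r, Relation.EqvGen.trans _ _ _ hr (Relation.EqvGen.symm _ _ hR), hx⟩
    · exact Or.inr ⟨v, (comp_mul_left_iff G h v).2 hv, hx⟩
  · rintro (⟨r, hr, hx⟩ | ⟨v, hv, hx⟩)
    · exact Or.inl ⟨r, Relation.EqvGen.trans _ _ _ hr hR, hx⟩
    · exact Or.inr ⟨v, (comp_mul_left_iff G h v).1 hv, hx⟩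

lemma rhoDom_of_rightComp {s t : S} (h : G.rightComp s = G.rightComp t)
    (hne : (G.rightComp s).Nonempty) : rhoDom G dom act s = rhoDom G dom act t := by
  have hR : Rrel G s t := Relation.EqvGen.rel _ _ (Or.inr (Or.inl ⟨h, hne⟩))
  have hcomp : ∀ v, G.comp s v ↔ G.comp t v := fun v => Set.ext_iff.1 h v
  ext x
  constructor
  · rintro (⟨r, hr, hx⟩ | ⟨v, hv, hx⟩)
    · exact Or.inl ⟨r, Relation.EqvGen.trans _ _ _ hr hR, hx⟩
    · exact Or.inr ⟨v, (hcomp v).1 hv, hx⟩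
  · rintro (⟨r, hr, hx⟩ | ⟨v, hv, hx⟩)
    · exact Or.inl ⟨r, Relation.EqvGen.trans _ _ _ hr (Relation.EqvGen.symm _ _ hR), hx⟩
    · exact Or.inr ⟨v, (hcomp v).2 hv, hx⟩

lemma someMem_iff (t : S) (y : X) :
    ((some t : Option S), y) ∈ DSet G dom act ↔ y ∈ rhoDom G dom act t := by
  constructor
  · intro h; exact h t rfl
  · intro h s hs
    cases Option.some.inj hs
    exact h

lemma mem_rhoDom_of_dom {t : S} {x : X} (hx : x ∈ dom t) : x ∈ rhoDom G dom act t :=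
  Or.inl ⟨t, Relation.EqvGen.refl _, hx⟩

lemma preRel_mem {p q : Option S × X} (h : preRel G dom act p q) :
    p ∈ DSet G dom act ∧ q ∈ DSet G dom act := by
  rcases h with ⟨s, x, hx, hp, hq⟩ | ⟨t, u, x, htu, hx, hp, hq⟩
  · subst hp; subst hq
    exact ⟨noneMem G dom act _, (someMem_iff G dom act _ _).2
      (mem_rhoDom_of_dom G dom act hx)⟩
  · subst hp; subst hq
    constructor
    · exact (someMem_iff G dom act _ _).2
        (Or.inl ⟨u, Relation.EqvGen.symm _ _ (rrel_mul G htu), hx⟩)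
    · exact (someMem_iff G dom act _ _).2 (Or.inr ⟨u, htu, ⟨x, hx, rfl⟩⟩)

lemma approx_mem_iff {p q : Option S × X} (h : approx G dom act p q) :
    p ∈ DSet G dom act ↔ q ∈ DSet G dom act := by
  induction h with
  | rel a b hab => have := preRel_mem G dom act hab; exact ⟨fun _ => this.2, fun _ => this.1⟩
  | refl a => exact Iff.rfl
  | symm a b _ ih => exact ih.symm
  | trans a b c _ _ ih1 ih2 => exact ih1.trans ih2

open Classical in
/-- The translation map realizing `β_s` on representatives. -/
noncomputable def Tmap (s : S) : Option S × X → Option S × X := fun p =>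
  match p with
  | (none, x) => (some s, x)
  | (some t, y) =>
    if G.comp s t then (some (G.mul s t), y)
    else if y ∈ dom t then (some s, act t y) else (some t, y)

lemma Tmap_none (s : S) (x : X) : Tmap G dom act s (none, x) = (some s, x) := rfl

open Classical in
lemma Tmap_some_pos {s t : S} (h : G.comp s t) (y : X) :
    Tmap G dom act s (some t, y) = (some (G.mul s t), y) := by
  simp [Tmap, if_pos h]

open Classical in
lemma Tmap_some_neg1 {s t : S} (h : ¬ G.comp s t) {y : X} (hy : y ∈ dom t) :
    Tmap G dom act s (some t, y) = (some s, act t y) := by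
  simp [Tmap, if_neg h, if_pos hy]

open Classical in
lemma Tmap_some_neg2 {s t : S} (h : ¬ G.comp s t) {y : X} (hy : y ∉ dom t) :
    Tmap G dom act s (some t, y) = (some t, y) := by
  simp [Tmap, if_neg h, if_neg hy]

lemma Tmap_preRel (hα : IsPartialAction G dom act) (s : S) {p q : Option S × X}
    (h : preRel G dom act p q) :
    approx G dom act (Tmap G dom act s p) (Tmap G dom act s q) := by
  rcases h with ⟨u, x, hx, hp, hq⟩ | ⟨t, u, x, htu, hx, hp, hq⟩
  · subst hp; subst hq
    rw [Tmap_none]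
    by_cases hsu : G.comp s u
    · rw [Tmap_some_pos G dom act hsu]
      exact Relation.EqvGen.symm _ _ (Relation.EqvGen.rel _ _
        (Or.inr ⟨s, u, x, hsu, hx, rfl, rfl⟩))
    · rw [Tmap_some_neg1 G dom act hsu hx]
      exact Relation.EqvGen.refl _
  · subst hp; subst hq
    by_cases hst : G.comp s t
    · have h1 := assoc_left G hst htu
      rw [Tmap_some_pos G dom act ((comp_mul_right_iff G htu s).2 hst),
        Tmap_some_pos G dom act hst, ← h1.2.2]
      exact Relation.EqvGen.rel _ _ (Or.inr ⟨G.mul s t, u, x, h1.1, hx, rfl, rfl⟩)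
    · have hstu : ¬ G.comp s (G.mul t u) := fun h => hst ((comp_mul_right_iff G htu s).1 h)
      have hP1 := Set.ext_iff.1 (hα.1 t u htu)
      by_cases hxd : x ∈ dom (G.mul t u)
      · have hmem : x ∈ dom u ∧ act u x ∈ dom t ∩ img dom act u := (hP1 x).2 ⟨hx, hxd⟩
        have hP2 := hα.2 t u htu x ⟨hx, hxd⟩
        rw [Tmap_some_neg1 G dom act hstu hxd,
          Tmap_some_neg1 G dom act hst hmem.2.1, hP2]
        exact Relation.EqvGen.refl _
      · have hnd : act u x ∉ dom t := by
          intro hc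
          exact hxd ((hP1 x).1 ⟨hx, hc, ⟨x, hx, rfl⟩⟩).2
        rw [Tmap_some_neg2 G dom act hstu hxd, Tmap_some_neg2 G dom act hst hnd]
        exact Relation.EqvGen.rel _ _ (Or.inr ⟨t, u, x, htu, hx, rfl, rfl⟩)

lemma Tmap_approx (hα : IsPartialAction G dom act) (s : S) {p q : Option S × X}
    (h : approx G dom act p q) :
    approx G dom act (Tmap G dom act s p) (Tmap G dom act s q) := by
  induction h with
  | rel a b hab => exact Tmap_preRel G dom act hα s hab
  | refl a => exact Relation.EqvGen.refl _
  | symm a b _ ih => exact Relation.EqvGen.symm _ _ ih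
  | trans a b c _ _ ih1 ih2 => exact Relation.EqvGen.trans _ _ _ ih1 ih2

open Classical in
/-- The map `β_s` on representatives. -/
noncomputable def fmap (s : S) (p : DSet G dom act) : EType G dom act :=
  if h : Tmap G dom act s p.val ∈ DSet G dom act then mkE G dom act ⟨_, h⟩
  else mkE G dom act p

lemma mkE_eq_of_approx {p q : Option S × X} (hp : p ∈ DSet G dom act)
    (hq : q ∈ DSet G dom act) (h : approx G dom act p q) :
    mkE G dom act ⟨p, hp⟩ = mkE G dom act ⟨q, hq⟩ :=
  Quotient.sound h

lemma fmap_respects (hα : IsPartialAction G dom act) (s : S) (p q : DSet G dom act)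
    (h : (DSetoid G dom act).r p q) : fmap G dom act s p = fmap G dom act s q := by
  have happ : approx G dom act p.val q.val := h
  have hT := Tmap_approx G dom act hα s happ
  have hiff := approx_mem_iff G dom act hT
  unfold fmap
  by_cases hp : Tmap G dom act s p.val ∈ DSet G dom act
  · rw [dif_pos hp, dif_pos (hiff.1 hp)]
    exact mkE_eq_of_approx G dom act _ _ hT
  · rw [dif_neg hp, dif_neg (fun hc => hp (hiff.2 hc))]
    exact mkE_eq_of_approx G dom act _ _ happ

/-- The induced action on `E`. -/
noncomputable def betaE (hα : IsPartialAction G dom act) (s : S) :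
    EType G dom act → EType G dom act :=
  Quotient.lift (fmap G dom act s) (fmap_respects G dom act hα s)

lemma betaE_some (hα : IsPartialAction G dom act) {s t : S} (h : G.comp s t)
    (y : X) (hD : ((some t : Option S), y) ∈ DSet G dom act) :
    ∃ hD' : ((some (G.mul s t) : Option S), y) ∈ DSet G dom act,
      betaE G dom act hα s (mkE G dom act ⟨(some t, y), hD⟩) =
        mkE G dom act ⟨(some (G.mul s t), y), hD'⟩ := by
  have hy : y ∈ rhoDom G dom act t := (someMem_iff G dom act t y).1 hD
  have hD' : ((some (G.mul s t) : Option S), y) ∈ DSet G dom act :=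
    (someMem_iff G dom act _ y).2 (rhoDom_mul G dom act h ▸ hy)
  refine ⟨hD', ?_⟩
  show fmap G dom act s ⟨(some t, y), hD⟩ = _
  unfold fmap
  have hT : Tmap G dom act s (some t, y) = (some (G.mul s t), y) :=
    Tmap_some_pos G dom act h y
  rw [dif_pos (hT ▸ hD' : Tmap G dom act s (some t, y) ∈ DSet G dom act)]
  exact congrArg (mkE G dom act) (Subtype.ext hT)

lemma betaE_none (hα : IsPartialAction G dom act) {s : S} {x : X}
    (hx : x ∈ rhoDom G dom act s) :
    ∃ hD' : ((some s : Option S), x) ∈ DSet G dom act,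
      betaE G dom act hα s (deltaMap G dom act x) =
        mkE G dom act ⟨(some s, x), hD'⟩ := by
  have hD' : ((some s : Option S), x) ∈ DSet G dom act :=
    (someMem_iff G dom act s x).2 hx
  refine ⟨hD', ?_⟩
  show fmap G dom act s ⟨(none, x), noneMem G dom act x⟩ = _
  unfold fmap
  have hT : Tmap G dom act s (none, x) = (some s, x) := rfl
  rw [dif_pos (hT ▸ hD' : Tmap G dom act s (none, x) ∈ DSet G dom act)]
  exact congrArg (mkE G dom act) (Subtype.ext hT)

/-- Characterization of membership in `domE` by canonical representatives. -/
lemma mem_domE_iff {s : S} {e : EType G dom act} :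
    e ∈ domE G dom act s ↔
      ∃ (p : Option S × X) (hp : p ∈ DSet G dom act), mkE G dom act ⟨p, hp⟩ = e ∧
        ((∃ t y, p = (some t, y) ∧ G.comp s t) ∨
          (∃ x, p = (none, x) ∧ x ∈ rhoDom G dom act s)) := by
  constructor
  · rintro (⟨p, t, y, hcomp, happ, he⟩ | ⟨x, hx, he⟩)
    · have hq : ((some t : Option S), y) ∈ DSet G dom act :=
        (approx_mem_iff G dom act happ).1 p.2
      refine ⟨(some t, y), hq, ?_, Or.inl ⟨t, y, rfl, hcomp⟩⟩
      rw [he]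
      exact (mkE_eq_of_approx G dom act p.2 hq happ).symm
    · exact ⟨(none, x), noneMem G dom act x, he.symm, Or.inr ⟨x, rfl, hx⟩⟩
  · rintro ⟨p, hp, he, ⟨t, y, rfl, hcomp⟩ | ⟨x, rfl, hx⟩⟩
    · exact Or.inl ⟨⟨(some t, y), hp⟩, t, y, hcomp, Relation.EqvGen.refl _, he.symm⟩
    · exact Or.inr ⟨x, hx, he.symm⟩

lemma betaE_mem_domE (hα : IsPartialAction G dom act) {s t : S} (hst : G.comp s t)
    {e : EType G dom act} (he : e ∈ domE G dom act t) :
    betaE G dom act hα t e ∈ domE G dom act s := by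
  rcases (mem_domE_iff G dom act).1 he with ⟨p, hp, hpe, ⟨u, y, rfl, htu⟩ | ⟨x, rfl, hx⟩⟩
  · obtain ⟨hD', heq⟩ := betaE_some G dom act hα htu y hp
    rw [← hpe, heq]
    exact (mem_domE_iff G dom act).2
      ⟨(some (G.mul t u), y), hD', rfl,
        Or.inl ⟨G.mul t u, y, rfl, (assoc_left G hst htu).2.1⟩⟩
  · obtain ⟨hD', heq⟩ := betaE_none G dom act hα hx
    rw [← hpe]
    have : mkE G dom act ⟨((none : Option S), x), hp⟩ = deltaMap G dom act x := rfl
    rw [this, heq]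
    exact (mem_domE_iff G dom act).2
      ⟨(some t, x), hD', rfl, Or.inl ⟨t, x, rfl, hst⟩⟩

lemma domE_mul {s t : S} (h : G.comp s t) :
    domE G dom act t = domE G dom act (G.mul s t) := by
  ext e
  rw [mem_domE_iff, mem_domE_iff]
  constructor
  · rintro ⟨p, hp, he, ⟨u, y, rfl, hcomp⟩ | ⟨x, rfl, hx⟩⟩
    · exact ⟨_, hp, he, Or.inl ⟨u, y, rfl, (comp_mul_left_iff G h u).2 hcomp⟩⟩
    · exact ⟨_, hp, he, Or.inr ⟨x, rfl, rhoDom_mul G dom act h ▸ hx⟩⟩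
  · rintro ⟨p, hp, he, ⟨u, y, rfl, hcomp⟩ | ⟨x, rfl, hx⟩⟩
    · exact ⟨_, hp, he, Or.inl ⟨u, y, rfl, (comp_mul_left_iff G h u).1 hcomp⟩⟩
    · exact ⟨_, hp, he, Or.inr ⟨x, rfl, (rhoDom_mul G dom act h).symm ▸ hx⟩⟩

lemma domE_rightComp {s t : S} (h : G.rightComp s = G.rightComp t)
    (hne : (G.rightComp s).Nonempty) : domE G dom act s = domE G dom act t := by
  have hcomp : ∀ v, G.comp s v ↔ G.comp t v := fun v => Set.ext_iff.1 h v
  have hrho := rhoDom_of_rightComp G dom act h hne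
  ext e
  rw [mem_domE_iff, mem_domE_iff]
  constructor
  · rintro ⟨p, hp, he, ⟨u, y, rfl, hc⟩ | ⟨x, rfl, hx⟩⟩
    · exact ⟨_, hp, he, Or.inl ⟨u, y, rfl, (hcomp u).1 hc⟩⟩
    · exact ⟨_, hp, he, Or.inr ⟨x, rfl, hrho ▸ hx⟩⟩
  · rintro ⟨p, hp, he, ⟨u, y, rfl, hc⟩ | ⟨x, rfl, hx⟩⟩
    · exact ⟨_, hp, he, Or.inl ⟨u, y, rfl, (hcomp u).2 hc⟩⟩
    · exact ⟨_, hp, he, Or.inr ⟨x, rfl, hrho.symm ▸ hx⟩⟩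

end Aux

end Semigroupoid

open Semigroupoid in
/-- There is a well-defined family of maps `β_s : ₛE → E` with `β_s([t,y]) = [st,y]`
for `t ∈ S^s` and `β_s([δ,x]) = [s,x]` for `x ∈ ₍ρₛ₎X`, and `(β,E)` is a global action
of `S` on `E = D/≈`. -/
theorem statement15 {S : Type u} {X : Type v} (G : Semigroupoid S)
    (dom : S → Set X) (act : S → X → X) (hα : IsPartialAction G dom act) :
    ∃ βE : S → EType G dom act → EType G dom act,
      (∀ (s t : S) (y : X), G.comp s t →
        ∀ hD : ((some t : Option S), y) ∈ DSet G dom act,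
          ∃ hD' : ((some (G.mul s t) : Option S), y) ∈ DSet G dom act,
            βE s (mkE G dom act ⟨(some t, y), hD⟩) =
              mkE G dom act ⟨(some (G.mul s t), y), hD'⟩) ∧
      (∀ (s : S) (x : X), x ∈ rhoDom G dom act s →
        ∃ hD' : ((some s : Option S), x) ∈ DSet G dom act,
          βE s (deltaMap G dom act x) = mkE G dom act ⟨(some s, x), hD'⟩) ∧
      IsGlobalAction G (domE G dom act) βE := by
  classical
  refine ⟨betaE G dom act hα, ?_, ?_, ⟨?_, ?_⟩, ?_, ?_⟩
  · intro s t y h hD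
    exact betaE_some G dom act hα h y hD
  · intro s x hx
    exact betaE_none G dom act hα hx
  · -- P1
    intro s t hst
    ext e
    simp only [Set.mem_setOf_eq, Set.mem_inter_iff]
    constructor
    · rintro ⟨het, -⟩
      exact ⟨het, domE_mul G dom act hst ▸ het⟩
    · rintro ⟨het, -⟩
      exact ⟨het, ⟨betaE_mem_domE G dom act hα hst het, ⟨e, het, rfl⟩⟩⟩
  · -- P2
    rintro s t hst e ⟨het, -⟩
    rcases (mem_domE_iff G dom act).1 het with
      ⟨p, hp, hpe, ⟨u, y, rfl, htu⟩ | ⟨x, rfl, hx⟩⟩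
    · rw [← hpe]
      obtain ⟨hD1, h1⟩ := betaE_some G dom act hα htu y hp
      rw [h1]
      have hstu : G.comp s (G.mul t u) := (assoc_left G hst htu).2.1
      obtain ⟨hD2, h2⟩ := betaE_some G dom act hα hstu y hD1
      rw [h2]
      obtain ⟨hD3, h3⟩ := betaE_some G dom act hα (assoc_left G hst htu).1 y hp
      rw [h3]
      refine congrArg (mkE G dom act) (Subtype.ext ?_)
      simp [(assoc_left G hst htu).2.2]
    · rw [← hpe]
      have hd : mkE G dom act ⟨((none : Option S), x), hp⟩ = deltaMap G dom act x := rfl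
      rw [hd]
      obtain ⟨hD1, h1⟩ := betaE_none G dom act hα hx
      rw [h1]
      obtain ⟨hD2, h2⟩ := betaE_some G dom act hα hst x hD1
      rw [h2]
      obtain ⟨hD3, h3⟩ := betaE_none G dom act hα (rhoDom_mul G dom act hst ▸ hx :
        x ∈ rhoDom G dom act (G.mul s t))
      rw [h3]
  · -- G1
    intro s t h hne
    exact domE_rightComp G dom act h hne
  · -- G2
    intro s t h
    exact domE_mul G dom act h
end

section
/- Let S be a semigroupoid, (α,X) a partial action of S, and e ∈ S an identity element of S. Then: (i) α_e is a projection, i.e. X_e ⊆ ₑX and α_e(x) = x for every x ∈ X_e; (ii) if (e,s) ∈ S⁽²⁾, then X_s ⊆ X_e. -/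
universe u v w

open Semigroupoid in
/-- `e` is an identity element of the semigroupoid. -/
def Semigroupoid.IsIdentity {S : Type u} (G : Semigroupoid S) (e : S) : Prop :=
  G.comp e e ∧ (∀ s : S, G.comp s e → G.mul s e = s) ∧ (∀ t : S, G.comp e t → G.mul e t = t)

open Semigroupoid in
/-- For an identity `e`: (i) `α_e` is a projection, i.e. `X_e ⊆ ₑX` and `α_e(x) = x` for
`x ∈ X_e`; (ii) if `(e,s) ∈ S⁽²⁾` then `X_s ⊆ X_e`. -/
theorem statement18 {S : Type u} {X : Type v} (G : Semigroupoid S)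
    (dom : S → Set X) (act : S → X → X) (hα : IsPartialAction G dom act)
    (e : S) (he : IsIdentity G e) :
    (img dom act e ⊆ dom e ∧ ∀ x ∈ img dom act e, act e x = x) ∧
    (∀ s : S, G.comp e s → img dom act s ⊆ img dom act e) := by
  obtain ⟨hP1, hP2⟩ := hα
  obtain ⟨hee, hre, hle⟩ := he
  have hmul : G.mul e e = e := hle e hee
  have h1 := hP1 e e hee
  rw [hmul] at h1
  have key : ∀ x ∈ dom e, act e x ∈ dom e ∩ img dom act e := by
    intro x hx
    have : x ∈ {x | x ∈ dom e ∧ act e x ∈ dom e ∩ img dom act e} := by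
      rw [h1]; exact ⟨hx, hx⟩
    exact this.2
  constructor
  · constructor
    · rintro y ⟨x, hx, rfl⟩
      exact (key x hx).1
    · rintro y ⟨x, hx, rfl⟩
      have h2 := hP2 e e hee x ⟨hx, by rw [hmul]; exact hx⟩
      rw [hmul] at h2
      exact h2
  · intro s hes y hy
    obtain ⟨x, hx, rfl⟩ := hy
    have h1s := hP1 e s hes
    rw [hle s hes] at h1s
    have hmem : x ∈ {x | x ∈ dom s ∧ act s x ∈ dom e ∩ img dom act s} := by
      rw [h1s]; exact ⟨hx, hx⟩
    have h2 := hP2 e s hes x ⟨hx, by rw [hle s hes]; exact hx⟩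
    rw [hle s hes] at h2
    exact ⟨act s x, hmem.2.1, h2⟩
end

section
/- Let S be a semigroup, regarded as a semigroupoid with S⁽²⁾ = S × S, and let (α,X) be a partial (semigroupoid) action of S on X. Then (α,X) satisfies ₛX = X for every s ∈ S (i.e. it is a strong global semigroup action in the sense of Kudryavtseva and Laan) if and only if (α,X) is a non-degenerate global semigroupoid action of S on X. -/
universe u v w

open Semigroupoid in
/-- For a semigroup `S` (a nonempty semigroupoid with `S⁽²⁾ = S × S`) and a partial action
`(α,X)` of `S`: `(α,X)` satisfies `ₛX = X` for every `s` (i.e. is a strong global semigroup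
action in the sense of Kudryavtseva and Laan) iff `(α,X)` is a non-degenerate global
semigroupoid action. -/
theorem statement19 {S : Type u} {X : Type v} (G : Semigroupoid S) [Nonempty S]
    (hS : ∀ s t : S, G.comp s t)
    (dom : S → Set X) (act : S → X → X) (hα : IsPartialAction G dom act) :
    (∀ s : S, dom s = Set.univ) ↔
      (IsGlobalAction G dom act ∧ Nondegenerate G dom act) := by
  constructor
  · intro h
    refine ⟨⟨hα, ?_, ?_⟩, ?_⟩
    · intro s t _ _; rw [h s, h t]
    · intro s t _; rw [h t, h (G.mul s t)]
    · apply Set.eq_univ_of_univ_subset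
      intro x _
      exact Set.mem_iUnion.2 ⟨Classical.arbitrary S, Or.inl (by rw [h]; trivial)⟩
  · rintro ⟨⟨_, hG1, _⟩, hnd⟩
    intro s
    have hdom : ∀ t : S, dom t = dom s := by
      intro t
      apply hG1
      · ext u; simp [Semigroupoid.rightComp, hS]
      · exact ⟨s, hS t s⟩
    apply Set.eq_univ_of_univ_subset
    intro x _
    have hx : x ∈ ⋃ t, dom t ∪ Semigroupoid.img dom act t := by rw [hnd]; trivial
    obtain ⟨t, ht⟩ := Set.mem_iUnion.1 hx
    cases ht with
    | inl h => exact hdom t ▸ h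
    | inr h =>
      obtain ⟨y, hy, rfl⟩ := h
      have hP1 := hα.1 s t (hS s t)
      have hmem : y ∈ dom t ∩ dom (G.mul s t) := by
        refine ⟨hy, ?_⟩
        rw [hdom (G.mul s t), ← hdom t]; exact hy
      rw [← hP1] at hmem
      exact hmem.2.1
end
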